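/- Let n ≥ 1, α > 0, and let f : ℝⁿ → ℝⁿ be continuous, locally injective, and α-covering at each point x ∈ ℝⁿ (meaning: for every x and every ε > 0 there exists r ∈ (0, ε] such that the ball B(f(x), αr) is contained in f(B(x, r))). Then f is a global homeomorphism of ℝⁿ onto ℝⁿ and f⁻¹ is Lipschitz continuous with constant α⁻¹. -/

import Mathlib

open Set Metric Function

variable {E : Type*} [NormedAddCommGroup E] [NormedSpace ℝ E] [ProperSpace E]
variable {α : ℝ} {f : E → E}

set_option maxHeartbeats 1000000

section Aux
variable (hα : 0 < α) (hcont : Continuous f)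
  (hlocinj : ∀ x, ∃ U ∈ nhds x, Set.InjOn f U)
  (hcov : ∀ x, ∀ ε : ℝ, 0 < ε → ∃ r : ℝ, 0 < r ∧ r ≤ ε ∧
      Metric.closedBall (f x) (α * r) ⊆ f '' Metric.closedBall x r)

include hα hcov in
theorem cov_isOpenMap : IsOpenMap f := by
  intro U hU
  rw [Metric.isOpen_iff]
  rintro _ ⟨x, hxU, rfl⟩
  obtain ⟨ε, hε, hballU⟩ := (Metric.nhds_basis_closedBall.mem_iff).mp (hU.mem_nhds hxU)
  obtain ⟨r, hr, hrε, hcov'⟩ := hcov x ε hε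
  exact ⟨α * r, by positivity, fun y hy =>
    (image_mono (f := f) ((closedBall_subset_closedBall hrε).trans hballU))
      (hcov' (ball_subset_closedBall hy))⟩

include hα hcont hcov in
/-- Ekeland-type global covering lemma. -/
theorem cov_exists_preimage (x w : E) :
    ∃ z, f z = w ∧ α * dist z x ≤ dist w (f x) := by
  set C : Set E := {z | α * dist z x + dist (f z) w ≤ dist (f x) w} with hC
  have hxC : x ∈ C := by simp [hC, dist_comm]
  have hCclosed : IsClosed C := by
    have : Continuous fun z => α * dist z x + dist (f z) w := by fun_prop
    exact isClosed_le this continuous_const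
  have hCsub : C ⊆ closedBall x (α⁻¹ * dist (f x) w) := by
    intro z hz
    have hz' := hz
    simp only [hC, mem_setOf_eq] at hz'
    have h1 : α * dist z x ≤ dist (f x) w := by
      nlinarith [dist_nonneg (x := f z) (y := w)]
    have : dist z x ≤ α⁻¹ * dist (f x) w := by
      rw [le_inv_mul_iff₀ hα]; exact h1
    simpa [mem_closedBall] using this
  have hCcompact : IsCompact C :=
    (isCompact_closedBall x _).of_isClosed_subset hCclosed hCsub
  obtain ⟨z₀, hz₀C, hmin⟩ := hCcompact.exists_isMinOn ⟨x, hxC⟩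
    (Continuous.continuousOn (by fun_prop : Continuous fun z => dist (f z) w))
  set m := dist (f z₀) w with hm
  rcases eq_or_lt_of_le (dist_nonneg : 0 ≤ m) with hm0 | hmpos
  · refine ⟨z₀, dist_eq_zero.mp hm0.symm, ?_⟩
    have := hz₀C
    simp only [hC, mem_setOf_eq, ← hm, ← hm0] at this
    rw [dist_comm w (f x)]; linarith
  · exfalso
    obtain ⟨r, hrpos, hrle, hcov'⟩ := hcov z₀ (m / (2 * α)) (by positivity)
    have hαr : α * r ≤ m / 2 := by
      have he : α * (m / (2 * α)) = m / 2 := by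
        field_simp
      nlinarith
    have hαrm : α * r < m := by nlinarith
    have hαrpos : 0 < α * r := by positivity
    set y' := f z₀ + (α * r / m) • (w - f z₀) with hy'
    have hwfz : ‖w - f z₀‖ = m := by rw [← dist_eq_norm, dist_comm]
    have hy'ball : y' ∈ closedBall (f z₀) (α * r) := by
      rw [mem_closedBall, dist_eq_norm, hy']
      have : f z₀ + (α * r / m) • (w - f z₀) - f z₀ = (α * r / m) • (w - f z₀) := by abel
      rw [this, norm_smul, Real.norm_eq_abs, abs_of_nonneg (by positivity), hwfz]
      rw [div_mul_cancel₀ _ (ne_of_gt hmpos)]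
    obtain ⟨z', hz'ball, hz'⟩ := hcov' hy'ball
    have hdist' : dist (f z') w = m - α * r := by
      rw [hz', dist_eq_norm, hy']
      have h1 : f z₀ + (α * r / m) • (w - f z₀) - w
          = -((1 - α * r / m) • (w - f z₀)) := by
        rw [sub_smul, one_smul]; module
      rw [h1, norm_neg, norm_smul, Real.norm_eq_abs,
        abs_of_nonneg (by nlinarith [(div_le_one hmpos).mpr hαrm.le]), hwfz]
      rw [sub_mul, one_mul, div_mul_cancel₀ _ (ne_of_gt hmpos)]
    have hz'C : z' ∈ C := by
      simp only [hC, mem_setOf_eq]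
      have h2 : dist z' x ≤ dist z' z₀ + dist z₀ x := dist_triangle _ _ _
      have h3 : dist z' z₀ ≤ r := mem_closedBall.mp hz'ball
      have h4 := hz₀C
      simp only [hC, mem_setOf_eq, ← hm] at h4
      rw [hdist']
      nlinarith
    have h5 : m ≤ dist (f z') w := hmin hz'C
    rw [hdist'] at h5
    linarith


include hα hcont hlocinj hcov in
/-- Local expansion. -/
theorem cov_loc_exp (x : E) :
    ∃ δ > 0, ∀ y, dist y x ≤ δ → α * dist y x ≤ dist (f y) (f x) := by
  have hEk := cov_exists_preimage hα hcont hcov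
  obtain ⟨U, hU, hinj⟩ := hlocinj x
  obtain ⟨ρ, hρ, hballU⟩ := (Metric.nhds_basis_closedBall.mem_iff).mp hU
  obtain ⟨δ₀, hδ₀, hcont'⟩ := Metric.continuousAt_iff.mp hcont.continuousAt
    (ε := α * ρ / 2) (by positivity)
  refine ⟨min (δ₀ / 2) (ρ / 2), by positivity, fun y hy => ?_⟩
  have hyδ₀ : dist y x < δ₀ := lt_of_le_of_lt (hy.trans (min_le_left _ _)) (by linarith)
  have hyρ : dist y x ≤ ρ / 2 := hy.trans (min_le_right _ _)
  have hfy : dist (f y) (f x) < α * ρ / 2 := hcont' hyδ₀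
  obtain ⟨z, hz, hzle⟩ := hEk y (f x)
  have hzy : dist z y ≤ ρ / 2 := by
    have : α * dist z y ≤ α * (ρ / 2) := by
      calc α * dist z y ≤ dist (f x) (f y) := hzle
        _ ≤ α * (ρ / 2) := by rw [dist_comm]; linarith
    exact le_of_mul_le_mul_left this hα
  have hzx : z ∈ closedBall x ρ := by
    rw [mem_closedBall]
    calc dist z x ≤ dist z y + dist y x := dist_triangle _ _ _
      _ ≤ ρ / 2 + ρ / 2 := by linarith
      _ = ρ := by ring
  have hzeq : z = x := hinj (hballU hzx) (hballU (mem_closedBall_self hρ.le)) hz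
  rw [dist_comm (f y) (f x), dist_comm y x]
  rw [hzeq] at hzle
  exact hzle

include hlocinj in
/-- Charts: open sets on which `f` is injective. -/
theorem cov_chart (p : E) : ∃ V : Set E, IsOpen V ∧ p ∈ V ∧ Set.InjOn f V := by
  obtain ⟨U, hU, hinj⟩ := hlocinj p
  exact ⟨interior U, isOpen_interior, mem_interior_iff_mem_nhds.mpr hU,
    hinj.mono interior_subset⟩

/-- Continuity of the local inverse. -/
theorem cov_invFunOn_continuousOn [Nonempty E] (hopen : IsOpenMap f) {V : Set E}
    (hV : IsOpen V) (hinj : Set.InjOn f V) :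
    ContinuousOn (Function.invFunOn f V) (f '' V) := by
  rw [_root_.continuousOn_iff']
  intro O hO
  refine ⟨f '' (V ∩ O), hopen _ (hV.inter hO), ?_⟩
  ext w
  simp only [mem_inter_iff, mem_preimage]
  constructor
  · rintro ⟨hwO, v, hvV, rfl⟩
    have : Function.invFunOn f V (f v) = v := hinj.leftInvOn_invFunOn hvV
    rw [this] at hwO
    exact ⟨⟨v, ⟨hvV, hwO⟩, rfl⟩, ⟨v, hvV, rfl⟩⟩
  · rintro ⟨⟨v, ⟨hvV, hvO⟩, rfl⟩, _⟩
    have : Function.invFunOn f V (f v) = v := hinj.leftInvOn_invFunOn hvV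
    rw [this]
    exact ⟨hvO, v, hvV, rfl⟩

include hlocinj in
/-- Uniqueness of lifts. -/
theorem cov_lift_unique {c : ℝ} {γ₁ γ₂ : ℝ → E}
    (h₁ : ContinuousOn γ₁ (Icc 0 c)) (h₂ : ContinuousOn γ₂ (Icc 0 c))
    (hlift : ∀ t ∈ Icc 0 c, f (γ₁ t) = f (γ₂ t)) (h0 : γ₁ 0 = γ₂ 0) :
    ∀ t ∈ Icc 0 c, γ₁ t = γ₂ t := by
  intro T hT
  set S : Set ℝ := {t ∈ Icc 0 T | γ₁ t = γ₂ t} with hS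
  have hsub : Icc 0 T ⊆ Icc 0 c := Icc_subset_Icc le_rfl hT.2
  have hSne : S.Nonempty := ⟨0, ⟨le_rfl, hT.1⟩, h0⟩
  have hSbdd : BddAbove S := ⟨T, fun t ht => ht.1.2⟩
  set m := sSup S with hm
  have hmS0 : ∀ s ∈ S, s ≤ m := fun s hs => le_csSup hSbdd hs
  have hmIcc : m ∈ Icc 0 T := ⟨le_csSup hSbdd hSne.choose_spec |>.trans' (by
      exact hSne.choose_spec.1.1) |> fun _ => le_csSup hSbdd ⟨⟨le_rfl, hT.1⟩, h0⟩,
    csSup_le hSne fun s hs => hs.1.2⟩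
  have hmc : m ∈ Icc 0 c := hsub hmIcc
  -- m ∈ S by a closure argument
  have hmS : m ∈ S := by
    have hclos : m ∈ closure S := csSup_mem_closure hSne hSbdd
    have hne : (nhdsWithin m S).NeBot := mem_closure_iff_nhdsWithin_neBot.mp hclos
    have hSsub : S ⊆ Icc 0 c := fun t ht => hsub ht.1
    have ht1 : Filter.Tendsto γ₁ (nhdsWithin m S) (nhds (γ₁ m)) :=
      (h₁ m hmc).mono_left (nhdsWithin_mono m hSsub)
    have ht2 : Filter.Tendsto γ₁ (nhdsWithin m S) (nhds (γ₂ m)) := by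
      have : Filter.Tendsto γ₂ (nhdsWithin m S) (nhds (γ₂ m)) :=
        (h₂ m hmc).mono_left (nhdsWithin_mono m hSsub)
      refine this.congr' ?_
      filter_upwards [self_mem_nhdsWithin] with t ht using ht.2.symm
    refine ⟨⟨?_, ?_⟩, tendsto_nhds_unique ht1 ht2⟩
    · exact hmIcc.1
    · exact hmIcc.2
  rcases eq_or_lt_of_le hmIcc.2 with heq | hlt
  · rw [← heq]; exact hmS.2
  · exfalso
    obtain ⟨U, hU, hinj⟩ := hlocinj (γ₁ m)
    have hU₂ : U ∈ nhds (γ₂ m) := by rwa [← hmS.2]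
    have hc₁ : γ₁ ⁻¹' U ∈ nhdsWithin m (Icc 0 c) := (h₁ m hmc) hU
    have hc₂ : γ₂ ⁻¹' U ∈ nhdsWithin m (Icc 0 c) := (h₂ m hmc) hU₂
    obtain ⟨ε, hε, hball⟩ := Metric.mem_nhdsWithin_iff.mp (Filter.inter_mem hc₁ hc₂)
    set t := min (m + ε / 2) T with ht
    have htm : m < t := lt_min (by linarith) hlt
    have htIcc : t ∈ Icc 0 c := ⟨le_trans hmIcc.1 htm.le, (min_le_right _ _).trans hT.2⟩
    have htball : t ∈ ball m ε := by
      rw [mem_ball, Real.dist_eq, abs_of_pos (by linarith)]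
      have : t ≤ m + ε / 2 := min_le_left _ _
      linarith
    have htU := hball ⟨htball, htIcc⟩
    have : γ₁ t = γ₂ t := hinj htU.1 htU.2 (hlift t htIcc)
    have : t ∈ S := ⟨⟨htIcc.1, min_le_right _ _⟩, this⟩
    exact absurd (hmS0 t this) (not_le.mpr htm)


include hα hcont hlocinj hcov in
/-- Lifts of Lipschitz paths are Lipschitz. -/
theorem cov_lift_lip {c K : ℝ} {σ γ : ℝ → E}
    (hσ : ∀ t₁ ∈ Icc (0:ℝ) c, ∀ t₂ ∈ Icc (0:ℝ) c, dist (σ t₁) (σ t₂) ≤ K * |t₁ - t₂|)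
    (hγ : ContinuousOn γ (Icc 0 c)) (hlift : ∀ t ∈ Icc (0:ℝ) c, f (γ t) = σ t) :
    ∀ t₁ ∈ Icc (0:ℝ) c, ∀ t₂ ∈ Icc (0:ℝ) c, α * dist (γ t₁) (γ t₂) ≤ K * |t₁ - t₂| := by
  have hle := cov_loc_exp hα hcont hlocinj hcov
  -- it suffices to treat the ordered case
  suffices H : ∀ t₁ ∈ Icc (0:ℝ) c, ∀ t₂ ∈ Icc (0:ℝ) c, t₁ ≤ t₂ →
      α * dist (γ t₁) (γ t₂) ≤ K * |t₁ - t₂| by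
    intro t₁ ht₁ t₂ ht₂
    rcases le_total t₁ t₂ with h | h
    · exact H t₁ ht₁ t₂ ht₂ h
    · rw [dist_comm, abs_sub_comm]; exact H t₂ ht₂ t₁ ht₁ h
  intro t₁ ht₁ t₂ ht₂ h12
  set S : Set ℝ := {t ∈ Icc t₁ t₂ | α * dist (γ t) (γ t₁) ≤ K * (t - t₁)} with hS
  have hsub : Icc t₁ t₂ ⊆ Icc 0 c := Icc_subset_Icc ht₁.1 ht₂.2
  have hSne : S.Nonempty := ⟨t₁, ⟨le_rfl, h12⟩, by simp⟩
  have hSbdd : BddAbove S := ⟨t₂, fun t ht => ht.1.2⟩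
  set m := sSup S with hm
  have hmub : ∀ s ∈ S, s ≤ m := fun s hs => le_csSup hSbdd hs
  have hmIcc : m ∈ Icc t₁ t₂ := ⟨le_csSup hSbdd ⟨⟨le_rfl, h12⟩, by simp⟩,
    csSup_le hSne fun s hs => hs.1.2⟩
  have hmc : m ∈ Icc 0 c := hsub hmIcc
  have hmS : m ∈ S := by
    have hclos : m ∈ closure S := csSup_mem_closure hSne hSbdd
    have hne : (nhdsWithin m S).NeBot := mem_closure_iff_nhdsWithin_neBot.mp hclos
    have hSsub : S ⊆ Icc 0 c := fun t ht => hsub ht.1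
    have ht1 : Filter.Tendsto (fun t => α * dist (γ t) (γ t₁)) (nhdsWithin m S)
        (nhds (α * dist (γ m) (γ t₁))) := by
      refine Filter.Tendsto.const_mul _ ?_
      exact Filter.Tendsto.dist ((hγ m hmc).mono_left (nhdsWithin_mono m hSsub))
        tendsto_const_nhds
    have ht2 : Filter.Tendsto (fun t => K * (t - t₁)) (nhdsWithin m S)
        (nhds (K * (m - t₁))) := by
      refine Filter.Tendsto.const_mul _ ?_
      exact (Filter.tendsto_id.sub tendsto_const_nhds).mono_left nhdsWithin_le_nhds
    have hev : ∀ᶠ t in nhdsWithin m S, α * dist (γ t) (γ t₁) ≤ K * (t - t₁) := by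
      filter_upwards [self_mem_nhdsWithin] with t ht using ht.2
    exact ⟨hmIcc, le_of_tendsto_of_tendsto ht1 ht2 hev⟩
  rcases eq_or_lt_of_le hmIcc.2 with heq | hlt
  · have h := hmS.2
    rw [heq] at h
    rw [dist_comm, abs_sub_comm, abs_of_nonneg (by linarith : (0:ℝ) ≤ t₂ - t₁)]
    exact h
  · exfalso
    obtain ⟨δ, hδ, hexp⟩ := hle (γ m)
    have hc : γ ⁻¹' closedBall (γ m) δ ∈ nhdsWithin m (Icc 0 c) :=
      (hγ m hmc) (closedBall_mem_nhds _ hδ)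
    obtain ⟨ε, hε, hball⟩ := Metric.mem_nhdsWithin_iff.mp hc
    set t := min (m + ε / 2) t₂ with ht
    have htm : m < t := lt_min (by linarith) hlt
    have htIcc2 : t ∈ Icc t₁ t₂ := ⟨le_trans hmIcc.1 htm.le, min_le_right _ _⟩
    have htIcc : t ∈ Icc 0 c := hsub htIcc2
    have htball : t ∈ ball m ε := by
      rw [mem_ball, Real.dist_eq, abs_of_pos (by linarith)]
      have : t ≤ m + ε / 2 := min_le_left _ _
      linarith
    have htδ : dist (γ t) (γ m) ≤ δ := hball ⟨htball, htIcc⟩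
    have hexp' : α * dist (γ t) (γ m) ≤ dist (f (γ t)) (f (γ m)) := hexp _ htδ
    rw [hlift t htIcc, hlift m hmc] at hexp'
    have hσ' : dist (σ t) (σ m) ≤ K * (t - m) := by
      have := hσ t htIcc m hmc
      rwa [abs_of_nonneg (by linarith)] at this
    have htS : t ∈ S := by
      refine ⟨htIcc2, ?_⟩
      have htri : dist (γ t) (γ t₁) ≤ dist (γ t) (γ m) + dist (γ m) (γ t₁) :=
        dist_triangle _ _ _
      have h1 : α * dist (γ t) (γ m) ≤ K * (t - m) := le_trans hexp' hσ'
      have h2 : α * dist (γ m) (γ t₁) ≤ K * (m - t₁) := hmS.2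
      nlinarith [dist_nonneg (x := γ t) (y := γ m), dist_nonneg (x := γ m) (y := γ t₁)]
    exact absurd (hmub t htS) (not_le.mpr htm)


include hα hcont hlocinj hcov in
/-- Existence of lifts of Lipschitz paths. -/
theorem cov_lift_exists [Nonempty E] {K : ℝ} (hK : 0 ≤ K) {σ : ℝ → E} {z₀ : E}
    (hσ : ∀ t₁ ∈ Icc (0:ℝ) 1, ∀ t₂ ∈ Icc (0:ℝ) 1, dist (σ t₁) (σ t₂) ≤ K * |t₁ - t₂|)
    (hz₀ : f z₀ = σ 0) :
    ∃ γ : ℝ → E, γ 0 = z₀ ∧ ContinuousOn γ (Icc 0 1) ∧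
      ∀ t ∈ Icc (0:ℝ) 1, f (γ t) = σ t := by
  classical
  have hainv : (0:ℝ) ≤ α⁻¹ * K := by positivity
  have hσcont : ContinuousOn σ (Icc 0 1) := by
    refine LipschitzOnWith.continuousOn (K := Real.toNNReal K) ?_
    refine LipschitzOnWith.of_dist_le_mul fun x hx y hy => ?_
    rw [Real.coe_toNNReal K hK, Real.dist_eq]
    exact hσ x hx y hy
  set P : ℝ → Prop := fun t => ∃ γ : ℝ → E, γ 0 = z₀ ∧ ContinuousOn γ (Icc 0 t) ∧
      ∀ τ ∈ Icc (0:ℝ) t, f (γ τ) = σ τ with hP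
  set A : Set ℝ := {t | t ∈ Icc (0:ℝ) 1 ∧ P t} with hA
  have h0A : 0 ∈ A := by
    refine ⟨⟨le_rfl, zero_le_one⟩, fun _ => z₀, rfl, continuousOn_const, fun τ hτ => ?_⟩
    have : τ = 0 := le_antisymm hτ.2 hτ.1
    rw [this]; exact hz₀
  have hdc : ∀ t ∈ A, ∀ t' ∈ Icc (0:ℝ) 1, t' ≤ t → t' ∈ A := by
    rintro t ⟨htI, γ, hγ0, hγc, hγl⟩ t' ht' htt'
    exact ⟨ht', γ, hγ0, hγc.mono (Icc_subset_Icc le_rfl htt'),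
      fun τ hτ => hγl τ ⟨hτ.1, hτ.2.trans htt'⟩⟩
  have hAne : A.Nonempty := ⟨0, h0A⟩
  have hAbdd : BddAbove A := ⟨1, fun t ht => ht.1.2⟩
  set m := sSup A with hm
  have hmub : ∀ s ∈ A, s ≤ m := fun s hs => le_csSup hAbdd hs
  have hmIcc : m ∈ Icc (0:ℝ) 1 := ⟨le_csSup hAbdd h0A, csSup_le hAne fun s hs => hs.1.2⟩
  have hIco : ∀ t, 0 ≤ t → t < m → t ∈ A := by
    intro t h0t htm
    obtain ⟨t', ht'A, htt'⟩ := exists_lt_of_lt_csSup hAne htm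
    exact hdc t' ht'A t ⟨h0t, htt'.le.trans ht'A.1.2⟩ htt'.le
  -- the canonical partial lift
  set Γ : ℝ → E := fun t => if h : P t then Classical.choose h t else z₀ with hΓ
  have hΓW : ∀ t (h : t ∈ A), ∀ τ ∈ Icc (0:ℝ) t, Γ τ = Classical.choose h.2 τ := by
    intro t h τ hτ
    have hτA : τ ∈ A := hdc t h τ ⟨hτ.1, hτ.2.trans h.1.2⟩ hτ.2
    have h1 := Classical.choose_spec hτA.2
    have h2 := Classical.choose_spec h.2
    have hΓτ : Γ τ = Classical.choose hτA.2 τ := by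
      simp only [hΓ]; rw [dif_pos hτA.2]
    rw [hΓτ]
    exact cov_lift_unique hlocinj (c := τ) h1.2.1
      (h2.2.1.mono (Icc_subset_Icc le_rfl hτ.2))
      (fun s hs => by rw [h1.2.2 s hs, h2.2.2 s ⟨hs.1, hs.2.trans hτ.2⟩])
      (h1.1.trans h2.1.symm) τ ⟨hτ.1, le_rfl⟩
  have hΓprop : ∀ t ∈ A, Γ 0 = z₀ ∧ ContinuousOn Γ (Icc 0 t) ∧
      ∀ τ ∈ Icc (0:ℝ) t, f (Γ τ) = σ τ := by
    intro t h
    have hs := Classical.choose_spec h.2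
    refine ⟨?_, ?_, ?_⟩
    · rw [hΓW t h 0 ⟨le_rfl, h.1.1⟩]
      have h0' := Classical.choose_spec h.2
      exact h0'.1
    · exact hs.2.1.congr fun τ hτ => hΓW t h τ hτ
    · intro τ hτ
      rw [hΓW t h τ hτ]
      exact hs.2.2 τ hτ
  -- Lipschitz property of Γ on [0, m)
  have hΓlip : ∀ τ₁ ∈ Ico (0:ℝ) m, ∀ τ₂ ∈ Ico (0:ℝ) m,
      dist (Γ τ₁) (Γ τ₂) ≤ α⁻¹ * K * |τ₁ - τ₂| := by
    intro τ₁ h₁ τ₂ h₂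
    set t := max τ₁ τ₂ with ht
    have htA : t ∈ A := hIco t (le_max_of_le_left h₁.1) (max_lt h₁.2 h₂.2)
    obtain ⟨_, hΓc, hΓl⟩ := hΓprop t htA
    have hsub : Icc (0:ℝ) t ⊆ Icc (0:ℝ) 1 :=
      Icc_subset_Icc le_rfl (htA.1.2)
    have := cov_lift_lip hα hcont hlocinj hcov (c := t) (K := K)
      (fun a ha b hb => hσ a (hsub ha) b (hsub hb)) hΓc hΓl
      τ₁ ⟨h₁.1, le_max_left _ _⟩ τ₂ ⟨h₂.1, le_max_right _ _⟩
    calc dist (Γ τ₁) (Γ τ₂) = α⁻¹ * (α * dist (Γ τ₁) (Γ τ₂)) := by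
          field_simp
      _ ≤ α⁻¹ * (K * |τ₁ - τ₂|) := by
          apply mul_le_mul_of_nonneg_left this (by positivity)
      _ = α⁻¹ * K * |τ₁ - τ₂| := by ring
  -- m ∈ A
  have hmA : m ∈ A := by
    rcases eq_or_lt_of_le hmIcc.1 with hm0 | hmpos
    · rwa [← hm0]
    · set s : ℕ → ℝ := fun k => m - m * (1 / (k + 1)) with hs
      have hsIco : ∀ k, s k ∈ Ico (0:ℝ) m := by
        intro k
        have h1 : 0 < 1 / ((k:ℝ) + 1) := by positivity
        have h2 : 1 / ((k:ℝ) + 1) ≤ 1 := by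
          rw [div_le_one (by positivity)]
          simp
        constructor
        · simp only [hs]; nlinarith
        · simp only [hs]; nlinarith
      have hsA : ∀ k, s k ∈ A := fun k => hIco (s k) (hsIco k).1 (hsIco k).2
      have hslim : Filter.Tendsto s Filter.atTop (nhds m) := by
        have h1 : Filter.Tendsto (fun k : ℕ => 1 / ((k:ℝ) + 1)) Filter.atTop (nhds 0) :=
          tendsto_one_div_add_atTop_nhds_zero_nat
        have h2 := Filter.Tendsto.sub (tendsto_const_nhds (x := m))
          (h1.const_mul m)
        simp only [hs]
        simpa using h2
      -- Cauchy
      have hcauchy : CauchySeq (fun k => Γ (s k)) := by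
        refine cauchySeq_of_le_tendsto_0 (fun N => α⁻¹ * K * (m * (1 / (N + 1)))) ?_ ?_
        · intro a b N haN hbN
          have hbound : ∀ i : ℕ, N ≤ i → m * (1 / ((i:ℝ) + 1)) ≤ m * (1 / ((N:ℝ) + 1)) := by
            intro i hi
            apply mul_le_mul_of_nonneg_left _ hmIcc.1
            apply div_le_div_of_nonneg_left one_pos.le (by positivity)
            exact_mod_cast by omega
          have h1 := hΓlip (s a) (hsIco a) (s b) (hsIco b)
          have h2 : |s a - s b| ≤ m * (1 / ((N:ℝ) + 1)) := by
            have ha' := hbound a haN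
            have hb' := hbound b hbN
            have hpa : 0 ≤ m * (1 / ((a:ℝ) + 1)) := by positivity
            have hpb : 0 ≤ m * (1 / ((b:ℝ) + 1)) := by positivity
            rw [abs_le]
            constructor <;> simp only [hs] <;> nlinarith
          calc dist (Γ (s a)) (Γ (s b)) ≤ α⁻¹ * K * |s a - s b| := h1
            _ ≤ α⁻¹ * K * (m * (1 / (N + 1))) := by
                apply mul_le_mul_of_nonneg_left h2 (by positivity)
        · have h1 : Filter.Tendsto (fun k : ℕ => 1 / ((k:ℝ) + 1)) Filter.atTop (nhds 0) :=
            tendsto_one_div_add_atTop_nhds_zero_nat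
          have := (h1.const_mul m).const_mul (α⁻¹ * K)
          simpa using this
      obtain ⟨L, hL⟩ := cauchySeq_tendsto_of_complete hcauchy
      have hfL : f L = σ m := by
        have h1 : Filter.Tendsto (fun k => f (Γ (s k))) Filter.atTop (nhds (f L)) :=
          (hcont.tendsto L).comp hL
        have h2 : ∀ k, f (Γ (s k)) = σ (s k) := by
          intro k
          exact (hΓprop (s k) (hsA k)).2.2 (s k) ⟨(hsIco k).1, le_rfl⟩
        have h3 : Filter.Tendsto (fun k => σ (s k)) Filter.atTop (nhds (σ m)) := by
          have hsub : ∀ k, s k ∈ Icc (0:ℝ) 1 :=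
            fun k => ⟨(hsIco k).1, (hsIco k).2.le.trans hmIcc.2⟩
          refine ((hσcont m hmIcc).tendsto).comp ?_
          rw [tendsto_nhdsWithin_iff]
          exact ⟨hslim, Filter.Eventually.of_forall hsub⟩
        rw [show (fun k => f (Γ (s k))) = fun k => σ (s k) from funext h2] at h1
        exact tendsto_nhds_unique h1 h3
      -- key distance bound to the limit
      have hkey : ∀ τ ∈ Ico (0:ℝ) m, dist (Γ τ) L ≤ α⁻¹ * K * |τ - m| := by
        intro τ hτ
        have h1 : Filter.Tendsto (fun k => dist (Γ τ) (Γ (s k))) Filter.atTop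
            (nhds (dist (Γ τ) L)) := (tendsto_const_nhds.dist hL)
        have h2 : Filter.Tendsto (fun k => α⁻¹ * K * |τ - s k|) Filter.atTop
            (nhds (α⁻¹ * K * |τ - m|)) := by
          refine Filter.Tendsto.const_mul _ ?_
          exact ((tendsto_const_nhds.sub hslim).abs)
        exact le_of_tendsto_of_tendsto h1 h2
          (Filter.Eventually.of_forall fun k => hΓlip τ hτ (s k) (hsIco k))
      set γ' : ℝ → E := fun τ => if τ < m then Γ τ else L with hγ'
      have hγ'lift : ∀ τ ∈ Icc (0:ℝ) m, f (γ' τ) = σ τ := by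
        intro τ hτ
        by_cases h : τ < m
        · simp only [hγ', if_pos h]
          exact (hΓprop τ (hIco τ hτ.1 h)).2.2 τ ⟨hτ.1, le_rfl⟩
        · have hτm : τ = m := le_antisymm hτ.2 (not_lt.mp h)
          subst hτm
          simp only [hγ', if_neg h]
          exact hfL
      have hγ'0 : γ' 0 = z₀ := by
        simp only [hγ', if_pos hmpos]
        exact (hΓprop 0 h0A).1
      have hγ'lip : ∀ τ₁ ∈ Icc (0:ℝ) m, ∀ τ₂ ∈ Icc (0:ℝ) m,
          dist (γ' τ₁) (γ' τ₂) ≤ α⁻¹ * K * dist τ₁ τ₂ := by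
        have key : ∀ τ₁ ∈ Icc (0:ℝ) m, ∀ τ₂ ∈ Icc (0:ℝ) m, τ₁ < m → ¬ τ₂ < m →
            dist (γ' τ₁) (γ' τ₂) ≤ α⁻¹ * K * dist τ₁ τ₂ := by
          intro τ₁ h₁ τ₂ h₂ hlt hnlt
          have hτ₂ : τ₂ = m := le_antisymm h₂.2 (not_lt.mp hnlt)
          simp only [hγ', if_pos hlt, if_neg hnlt]
          rw [Real.dist_eq, hτ₂]
          exact hkey τ₁ ⟨h₁.1, hlt⟩
        intro τ₁ h₁ τ₂ h₂
        by_cases hc₁ : τ₁ < m <;> by_cases hc₂ : τ₂ < m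
        · simp only [hγ', if_pos hc₁, if_pos hc₂]
          rw [Real.dist_eq]
          exact hΓlip τ₁ ⟨h₁.1, hc₁⟩ τ₂ ⟨h₂.1, hc₂⟩
        · exact key τ₁ h₁ τ₂ h₂ hc₁ hc₂
        · rw [dist_comm, dist_comm τ₁ τ₂]
          exact key τ₂ h₂ τ₁ h₁ hc₂ hc₁
        · have e₁ : τ₁ = m := le_antisymm h₁.2 (not_lt.mp hc₁)
          have e₂ : τ₂ = m := le_antisymm h₂.2 (not_lt.mp hc₂)
          rw [e₁, e₂]
          simp [dist_self]
      have hγ'cont : ContinuousOn γ' (Icc 0 m) := by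
        refine LipschitzOnWith.continuousOn (K := Real.toNNReal (α⁻¹ * K)) ?_
        refine LipschitzOnWith.of_dist_le_mul fun x hx y hy => ?_
        rw [Real.coe_toNNReal _ hainv]
        exact hγ'lip x hx y hy
      exact ⟨hmIcc, γ', hγ'0, hγ'cont, hγ'lift⟩
  -- conclude: m = 1
  rcases eq_or_lt_of_le hmIcc.2 with hm1 | hmlt
  · obtain ⟨_, γ, hγ0, hγc, hγl⟩ := hmA
    rw [hm1] at hγc hγl
    exact ⟨γ, hγ0, hγc, hγl⟩
  · exfalso
    obtain ⟨_, γm, hγm0, hγmc, hγml⟩ := hmA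
    obtain ⟨V, hVopen, hpmV, hVinj⟩ := cov_chart hlocinj (γm m)
    have hopen : IsOpenMap f := cov_isOpenMap hα hcov
    have hfVopen : IsOpen (f '' V) := hopen _ hVopen
    have hσmV : σ m ∈ f '' V := ⟨γm m, hpmV, hγml m ⟨hmIcc.1, le_rfl⟩⟩
    obtain ⟨ρ', hρ', hballV⟩ := Metric.isOpen_iff.mp hfVopen _ hσmV
    set η := ρ' / (2 * (K + 1)) with hη
    have hηpos : 0 < η := by positivity
    have hση : ∀ τ ∈ Icc (0:ℝ) 1, |τ - m| ≤ η → σ τ ∈ f '' V := by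
      intro τ hτ habs
      apply hballV
      rw [mem_ball]
      calc dist (σ τ) (σ m) ≤ K * |τ - m| := hσ τ hτ m hmIcc
        _ ≤ K * η := by
            apply mul_le_mul_of_nonneg_left habs hK
        _ < ρ' := by
            rw [hη, ← mul_div_assoc, div_lt_iff₀ (by positivity)]
            nlinarith
    set ψ := Function.invFunOn f V with hψ
    have hψc : ContinuousOn ψ (f '' V) :=
      cov_invFunOn_continuousOn hopen hVopen hVinj
    set t₂ := min (m + η) 1 with ht₂
    have hmt₂ : m < t₂ := lt_min (by linarith) hmlt
    have ht₂1 : t₂ ≤ 1 := min_le_right _ _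
    have ht₂0 : 0 ≤ t₂ := hmIcc.1.trans hmt₂.le
    have hmem : ∀ τ, m ≤ τ → τ ≤ t₂ → σ τ ∈ f '' V := by
      intro τ hmτ hτt₂
      refine hση τ ⟨hmIcc.1.trans hmτ, hτt₂.trans ht₂1⟩ ?_
      rw [abs_of_nonneg (by linarith)]
      have : τ ≤ m + η := hτt₂.trans (min_le_left _ _)
      linarith
    set γ'' : ℝ → E := fun τ => if τ ≤ m then γm τ else ψ (σ τ) with hγ''
    have hγ''0 : γ'' 0 = z₀ := by
      simp only [hγ'', if_pos hmIcc.1]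
      exact hγm0
    have hγ''lift : ∀ τ ∈ Icc (0:ℝ) t₂, f (γ'' τ) = σ τ := by
      intro τ hτ
      by_cases h : τ ≤ m
      · simp only [hγ'', if_pos h]
        exact hγml τ ⟨hτ.1, h⟩
      · simp only [hγ'', if_neg h]
        obtain ⟨a, haV, hfa⟩ := hmem τ (not_le.mp h).le hτ.2
        exact Function.invFunOn_eq ⟨a, haV, hfa⟩
    have hγ''cont : ContinuousOn γ'' (Icc 0 t₂) := by
      apply ContinuousOn.if
      · intro a ha
        have hfr : a ∈ frontier (Iic m) := ha.2
        rw [frontier_Iic, mem_singleton_iff] at hfr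
        subst hfr
        have h5 : ψ (f (γm m)) = γm m := hVinj.leftInvOn_invFunOn hpmV
        rw [hγml m ⟨hmIcc.1, le_rfl⟩] at h5
        exact h5.symm
      · refine hγmc.mono ?_
        intro x hx
        have hx2 : x ∈ closure {a | a ≤ m} := hx.2
        rw [show {a : ℝ | a ≤ m} = Iic m from rfl, isClosed_Iic.closure_eq] at hx2
        exact ⟨hx.1.1, hx2⟩
      · have hsub : Icc (0:ℝ) t₂ ∩ closure {a | ¬a ≤ m} ⊆ Icc m t₂ := by
          intro x hx
          have hx2 : x ∈ closure {a | ¬ a ≤ m} := hx.2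
          rw [show {a : ℝ | ¬ a ≤ m} = Ioi m by ext; simp, closure_Ioi] at hx2
          exact ⟨hx2, hx.1.2⟩
        refine (ContinuousOn.comp hψc ?_ ?_).mono hsub
        · exact hσcont.mono (Icc_subset_Icc (hmIcc.1) ht₂1)
        · intro τ hτ
          exact hmem τ hτ.1 hτ.2
    have ht₂A : t₂ ∈ A := ⟨⟨ht₂0, ht₂1⟩, γ'', hγ''0, hγ''cont, hγ''lift⟩
    exact absurd (hmub t₂ ht₂A) (not_le.mpr hmt₂)

include hα hcont hlocinj hcov in
/-- Construction of a continuous global right inverse by radial lifting. -/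
theorem cov_exists_inverse [Nonempty E] (x₀ : E) :
    ∃ g : E → E, Continuous g ∧ (∀ w, f (g w) = w) ∧ g (f x₀) = x₀ := by
  classical
  set y := f x₀ with hy
  set σ : E → ℝ → E := fun w t => y + t • (w - y) with hσdef
  have hσ0 : ∀ w, σ w 0 = y := by intro w; simp [hσdef]
  have hσ1 : ∀ w, σ w 1 = w := by intro w; simp [hσdef]
  have hσlip : ∀ w, ∀ t₁ ∈ Icc (0:ℝ) 1, ∀ t₂ ∈ Icc (0:ℝ) 1,
      dist (σ w t₁) (σ w t₂) ≤ dist w y * |t₁ - t₂| := by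
    intro w t₁ _ t₂ _
    rw [dist_eq_norm]
    have : σ w t₁ - σ w t₂ = (t₁ - t₂) • (w - y) := by
      simp only [hσdef]; module
    rw [this, norm_smul, Real.norm_eq_abs, dist_eq_norm]
    rw [mul_comm]
  have hσjc : Continuous (fun p : E × ℝ => σ p.1 p.2) := by
    simp only [hσdef]
    fun_prop
  -- choose lifts
  have hlifts : ∀ w : E, ∃ γ : ℝ → E, γ 0 = x₀ ∧ ContinuousOn γ (Icc 0 1) ∧
      ∀ t ∈ Icc (0:ℝ) 1, f (γ t) = σ w t := by
    intro w
    exact cov_lift_exists hα hcont hlocinj hcov dist_nonneg (hσlip w) (hσ0 w).symm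
  choose γ hγ0 hγc hγl using hlifts
  set g : E → E := fun w => γ w 1 with hg
  have hopen : IsOpenMap f := cov_isOpenMap hα hcov
  refine ⟨g, ?_, ?_, ?_⟩
  · -- continuity of g
    rw [continuous_iff_continuousAt]
    intro w₀
    set B : Set ℝ := {t | t ∈ Icc (0:ℝ) 1 ∧ ∃ S : Set E, S ∈ nhds w₀ ∧
      ∃ G : E × ℝ → E, ContinuousOn G (S ×ˢ Icc (0:ℝ) t) ∧
        (∀ w ∈ S, G (w, 0) = x₀) ∧
        ∀ w ∈ S, ∀ τ ∈ Icc (0:ℝ) t, f (G (w, τ)) = σ w τ} with hB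
    have h0B : 0 ∈ B := by
      refine ⟨⟨le_rfl, zero_le_one⟩, univ, Filter.univ_mem, fun _ => x₀,
        continuousOn_const, fun _ _ => rfl, fun w _ τ hτ => ?_⟩
      have : τ = 0 := le_antisymm hτ.2 hτ.1
      rw [this, hσ0 w]
    have hBne : B.Nonempty := ⟨0, h0B⟩
    have hBbdd : BddAbove B := ⟨1, fun t ht => ht.1.2⟩
    set m := sSup B with hm
    have hmub : ∀ s ∈ B, s ≤ m := fun s hs => le_csSup hBbdd hs
    have hmIcc : m ∈ Icc (0:ℝ) 1 := ⟨le_csSup hBbdd h0B, csSup_le hBne fun s hs => hs.1.2⟩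
    -- chart at γ w₀ m
    obtain ⟨V, hVopen, hpmV, hVinj⟩ := cov_chart hlocinj (γ w₀ m)
    have hfVopen : IsOpen (f '' V) := hopen _ hVopen
    have hσmV : σ w₀ m ∈ f '' V := ⟨γ w₀ m, hpmV, hγl w₀ m hmIcc⟩
    -- neighborhood of (w₀, m) mapped into f '' V by σ
    have hpre : (fun p : E × ℝ => σ p.1 p.2) ⁻¹' (f '' V) ∈ nhds (w₀, m) :=
      hσjc.continuousAt.preimage_mem_nhds (hfVopen.mem_nhds hσmV)
    obtain ⟨S₀, hS₀, T₀, hT₀, hsub₀⟩ := Filter.mem_prod_iff.mp (by rwa [nhds_prod_eq] at hpre)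
    obtain ⟨η, hηpos, hηsub⟩ := (Metric.nhds_basis_closedBall.mem_iff).mp hT₀
    have hmemfV : ∀ w ∈ S₀, ∀ τ : ℝ, |τ - m| ≤ η → σ w τ ∈ f '' V := by
      intro w hw τ hτ
      have : (w, τ) ∈ S₀ ×ˢ T₀ := ⟨hw, hηsub (by rwa [mem_closedBall, Real.dist_eq])⟩
      exact hsub₀ this
    -- continuity of γ w₀ at m within Icc 0 1 : find ε₁
    have hγpre : γ w₀ ⁻¹' V ∈ nhdsWithin m (Icc 0 1) :=
      (hγc w₀ m hmIcc) (hVopen.mem_nhds hpmV)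
    obtain ⟨ε, hεpos, hεsub⟩ := Metric.mem_nhdsWithin_iff.mp hγpre
    set ε₁ := min (ε / 2) η with hε₁
    have hε₁pos : 0 < ε₁ := lt_min (by linarith) hηpos
    have hε₁η : ε₁ ≤ η := min_le_right _ _
    have hγV : ∀ τ ∈ Icc (0:ℝ) 1, |τ - m| ≤ ε₁ → γ w₀ τ ∈ V := by
      intro τ hτ habs
      refine hεsub ⟨?_, hτ⟩
      rw [mem_ball, Real.dist_eq]
      have : |τ - m| ≤ ε / 2 := habs.trans (min_le_left _ _)
      linarith [abs_nonneg (τ - m)]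
    -- a time t₁ ∈ B close to m
    have ht₁ex : ∃ t₁, t₁ ∈ B ∧ |t₁ - m| ≤ ε₁ ∧ t₁ ≤ m := by
      rcases eq_or_lt_of_le hmIcc.1 with hm0 | hmpos
      · exact ⟨0, h0B, by rw [← hm0]; simpa using hε₁pos.le, hm0.le⟩
      · have hlt : max (m - ε₁) 0 < m := by
          rw [max_lt_iff]
          constructor <;> linarith
        obtain ⟨t₁, ht₁B, ht₁gt⟩ := exists_lt_of_lt_csSup hBne hlt
        have h1 : m - ε₁ < t₁ := lt_of_le_of_lt (le_max_left _ _) ht₁gt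
        have h2 : t₁ ≤ m := hmub t₁ ht₁B
        exact ⟨t₁, ht₁B, by rw [abs_le]; constructor <;> linarith, h2⟩
    obtain ⟨t₁, ht₁B, ht₁close, ht₁m⟩ := ht₁ex
    obtain ⟨ht₁Icc, S₁, hS₁, G₁, hG₁c, hG₁0, hG₁l⟩ := ht₁B
    have hw₀S₁ : w₀ ∈ S₁ := mem_of_mem_nhds hS₁
    -- G₁ (w₀, t₁) = γ w₀ t₁
    have hG₁w₀ : G₁ (w₀, t₁) = γ w₀ t₁ := by
      have hcγ : ContinuousOn (fun τ => G₁ (w₀, τ)) (Icc 0 t₁) := by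
        refine hG₁c.comp (Continuous.continuousOn (by fun_prop)) ?_
        intro τ hτ
        exact ⟨hw₀S₁, hτ⟩
      have := cov_lift_unique hlocinj (c := t₁) hcγ
        (hγc w₀ |>.mono (Icc_subset_Icc le_rfl ht₁Icc.2))
        (fun s hs => by
          rw [hG₁l w₀ hw₀S₁ s hs, hγl w₀ s ⟨hs.1, hs.2.trans ht₁Icc.2⟩])
        (by rw [hG₁0 w₀ hw₀S₁, hγ0 w₀])
        t₁ ⟨ht₁Icc.1, le_rfl⟩
      exact this
    have hγt₁V : γ w₀ t₁ ∈ V := hγV t₁ ht₁Icc ht₁close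
    -- S₂ : neighborhood where G₁ (·, t₁) lands in V
    have hcat : ContinuousAt (fun w => G₁ (w, t₁)) w₀ := by
      have hc : ContinuousOn (fun w => G₁ (w, t₁)) S₁ := by
        refine hG₁c.comp (Continuous.continuousOn (by fun_prop)) ?_
        intro w hw
        exact ⟨hw, ⟨ht₁Icc.1, le_rfl⟩⟩
      exact (hc w₀ hw₀S₁).continuousAt hS₁
    have hS₂ : (fun w => G₁ (w, t₁)) ⁻¹' V ∈ nhds w₀ := by
      apply hcat.preimage_mem_nhds
      apply hVopen.mem_nhds
      rw [hG₁w₀]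
      exact hγt₁V
    set ψ := Function.invFunOn f V with hψ
    have hψc : ContinuousOn ψ (f '' V) :=
      cov_invFunOn_continuousOn hopen hVopen hVinj
    set t₂ := min (m + η) 1 with ht₂def
    have ht₂0 : 0 ≤ t₂ := le_min (by linarith [hmIcc.1]) zero_le_one
    have ht₂1 : t₂ ≤ 1 := min_le_right _ _
    have ht₁t₂ : t₁ ≤ t₂ := le_min (by linarith) ht₁Icc.2
    have hmemτ : ∀ w ∈ S₀, ∀ τ : ℝ, t₁ ≤ τ → τ ≤ t₂ → σ w τ ∈ f '' V := by
      intro w hw τ h1 h2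
      refine hmemfV w hw τ ?_
      have hub : τ ≤ m + η := h2.trans (min_le_left _ _)
      have hlb : m - η ≤ τ := le_trans (by
        have := ht₁close
        rw [abs_le] at this
        linarith) h1
      rw [abs_le]
      constructor <;> linarith
    set S : Set E := S₀ ∩ ((fun w => G₁ (w, t₁)) ⁻¹' V) ∩ S₁ with hS
    have hSnhds : S ∈ nhds w₀ := Filter.inter_mem (Filter.inter_mem hS₀ hS₂) hS₁
    set G : E × ℝ → E := fun p => if p.2 ≤ t₁ then G₁ p else ψ (σ p.1 p.2) with hG
    have hGbase : ∀ w ∈ S, G (w, 0) = x₀ := by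
      intro w hw
      simp only [hG, if_pos ht₁Icc.1]
      exact hG₁0 w hw.2
    have hGlift : ∀ w ∈ S, ∀ τ ∈ Icc (0:ℝ) t₂, f (G (w, τ)) = σ w τ := by
      intro w hw τ hτ
      by_cases h : τ ≤ t₁
      · simp only [hG, if_pos h]
        exact hG₁l w hw.2 τ ⟨hτ.1, h⟩
      · simp only [hG, if_neg h]
        obtain ⟨a, haV, hfa⟩ := hmemτ w hw.1.1 τ (not_le.mp h).le hτ.2
        exact Function.invFunOn_eq ⟨a, haV, hfa⟩
    have hGcont : ContinuousOn G (S ×ˢ Icc (0:ℝ) t₂) := by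
      apply ContinuousOn.if
      · -- boundary
        intro p hp
        have hfr := hp.2
        have hfr2 : p ∈ closure {p : E × ℝ | p.2 ≤ t₁} ∩ closure {p : E × ℝ | p.2 ≤ t₁}ᶜ := by
          rwa [← frontier_eq_closure_inter_closure]
        have hple : p.2 ≤ t₁ := by
          have hcl : closure {p : E × ℝ | p.2 ≤ t₁} ⊆ {p : E × ℝ | p.2 ≤ t₁} :=
            (isClosed_le (by fun_prop) continuous_const).closure_subset
          exact hcl hfr2.1
        have hpge : t₁ ≤ p.2 := by
          have hcl : closure {p : E × ℝ | p.2 ≤ t₁}ᶜ ⊆ {p : E × ℝ | t₁ ≤ p.2} := by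
            apply closure_minimal
            · intro q hq
              have hq' : ¬ q.2 ≤ t₁ := hq
              exact (not_le.mp hq').le
            · exact isClosed_le continuous_const (by fun_prop)
          exact hcl hfr2.2
        have hpt₁ : p.2 = t₁ := le_antisymm hple hpge
        have hwS : p.1 ∈ S := hp.1.1
        have hmemV : G₁ (p.1, t₁) ∈ V := hwS.1.2
        have h5 : ψ (f (G₁ (p.1, t₁))) = G₁ (p.1, t₁) := hVinj.leftInvOn_invFunOn hmemV
        rw [hG₁l p.1 hwS.2 t₁ ⟨ht₁Icc.1, le_rfl⟩] at h5
        have : p = (p.1, t₁) := by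
          rw [← hpt₁]
        rw [this]
        exact h5.symm
      · -- first piece
        refine hG₁c.mono ?_
        intro p hp
        have hcl : closure {p : E × ℝ | p.2 ≤ t₁} ⊆ {p : E × ℝ | p.2 ≤ t₁} :=
          (isClosed_le (by fun_prop) continuous_const).closure_subset
        have hple : p.2 ≤ t₁ := hcl hp.2
        exact ⟨hp.1.1.2, ⟨hp.1.2.1, hple⟩⟩
      · -- second piece
        have hcl : closure {p : E × ℝ | ¬ p.2 ≤ t₁} ⊆ {p : E × ℝ | t₁ ≤ p.2} := by
          apply closure_minimal
          · intro q hq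
            exact (not_le.mp hq).le
          · exact isClosed_le continuous_const (by fun_prop)
        have hmain : ContinuousOn (fun p : E × ℝ => ψ (σ p.1 p.2))
            {p : E × ℝ | p.1 ∈ S₀ ∧ t₁ ≤ p.2 ∧ p.2 ≤ t₂} :=
          ContinuousOn.comp (s := {p : E × ℝ | p.1 ∈ S₀ ∧ t₁ ≤ p.2 ∧ p.2 ≤ t₂})
            hψc hσjc.continuousOn
            (fun p hp => hmemτ p.1 hp.1 p.2 hp.2.1 hp.2.2)
        refine hmain.mono ?_
        intro p hp
        exact ⟨hp.1.1.1.1, hcl hp.2, hp.1.2.2⟩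
    have ht₂B : t₂ ∈ B := ⟨⟨ht₂0, ht₂1⟩, S, hSnhds, G, hGcont, hGbase, hGlift⟩
    -- conclude m = 1 and 1 ∈ B
    have h1B : (1:ℝ) ∈ B := by
      have hle := hmub t₂ ht₂B
      rcases le_total (m + η) 1 with hcase | hcase
      · exfalso
        rw [ht₂def, min_eq_left hcase] at hle
        linarith
      · rwa [ht₂def, min_eq_right hcase] at ht₂B
    obtain ⟨_, S', hS', G', hG'c, hG'0, hG'l⟩ := h1B
    have hw₀S' : w₀ ∈ S' := mem_of_mem_nhds hS'
    have heq : ∀ w ∈ S', g w = G' (w, 1) := by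
      intro w hw
      have hcγ : ContinuousOn (fun τ => G' (w, τ)) (Icc 0 1) := by
        refine hG'c.comp (Continuous.continuousOn (by fun_prop)) ?_
        intro τ hτ
        exact ⟨hw, hτ⟩
      have := cov_lift_unique hlocinj (c := 1) (hγc w) hcγ
        (fun s hs => by rw [hγl w s hs, hG'l w hw s hs])
        (by rw [hγ0 w, hG'0 w hw])
        1 ⟨zero_le_one, le_rfl⟩
      exact this
    have hcG' : ContinuousOn (fun w => G' (w, 1)) S' := by
      refine hG'c.comp (Continuous.continuousOn (by fun_prop)) ?_
      intro w hw
      exact ⟨hw, ⟨zero_le_one, le_rfl⟩⟩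
    have hcat : ContinuousAt (fun w => G' (w, 1)) w₀ :=
      (hcG' w₀ hw₀S').continuousAt hS'
    refine hcat.congr ?_
    exact Filter.eventuallyEq_of_mem hS' fun w hw => (heq w hw).symm
  · -- right inverse
    intro w
    rw [hg]
    rw [hγl w 1 ⟨zero_le_one, le_rfl⟩]
    exact hσ1 w
  · -- g (f x₀) = x₀
    have hconst : ∀ t ∈ Icc (0:ℝ) 1, σ y t = y := by
      intro t _
      simp [hσdef]
    have := cov_lift_unique hlocinj (c := 1) (hγc y) continuousOn_const
      (fun s hs => by rw [hγl y s hs, hconst s hs, hy]) (by rw [hγ0 y])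
      1 ⟨zero_le_one, le_rfl⟩
    show γ (f x₀) 1 = x₀
    rw [← hy]
    exact this

end Aux

theorem stmt12 (n : ℕ) (hn : 1 ≤ n) (α : ℝ) (hα : 0 < α)
    (f : EuclideanSpace ℝ (Fin n) → EuclideanSpace ℝ (Fin n))
    (hcont : Continuous f)
    (hlocinj : ∀ x, ∃ U ∈ nhds x, Set.InjOn f U)
    (hcov : ∀ x, ∀ ε : ℝ, 0 < ε → ∃ r : ℝ, 0 < r ∧ r ≤ ε ∧
      Metric.closedBall (f x) (α * r) ⊆ f '' Metric.closedBall x r) :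
    IsHomeomorph f ∧ ∃ g : EuclideanSpace ℝ (Fin n) → EuclideanSpace ℝ (Fin n),
      Function.LeftInverse g f ∧ Function.RightInverse g f ∧
        LipschitzWith (Real.toNNReal α⁻¹) g := by
  obtain ⟨g, hgc, hgr, hgfix⟩ :=
    cov_exists_inverse hα hcont hlocinj hcov (0 : EuclideanSpace ℝ (Fin n))
  -- left inverse via a clopen argument
  have hleft : ∀ x, g (f x) = x := by
    set Sfix : Set (EuclideanSpace ℝ (Fin n)) := {x | g (f x) = x} with hSfix
    have hclosed : IsClosed Sfix := isClosed_eq (hgc.comp hcont) continuous_id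
    have hopenS : IsOpen Sfix := by
      rw [isOpen_iff_mem_nhds]
      intro x hx
      obtain ⟨U, hU, hinj⟩ := hlocinj x
      have hx' : g (f x) = x := hx
      have hnx : (fun z => g (f z)) ⁻¹' U ∈ nhds x := by
        apply (hgc.comp hcont).continuousAt.preimage_mem_nhds
        show U ∈ nhds (g (f x))
        rwa [hx']
      filter_upwards [hnx, hU] with z hz1 hz2
      exact hinj hz1 hz2 (hgr (f z))
    have hne : Sfix.Nonempty := ⟨0, hgfix⟩
    have hconn : PreconnectedSpace (EuclideanSpace ℝ (Fin n)) :=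
      ⟨by simpa using (convex_univ (𝕜 := ℝ) (E := EuclideanSpace ℝ (Fin n))).isPreconnected⟩
    have : Sfix = Set.univ := IsClopen.eq_univ ⟨hclosed, hopenS⟩ hne
    intro x
    have hx : x ∈ Sfix := this ▸ Set.mem_univ x
    exact hx
  have hinjf : Function.Injective f := Function.LeftInverse.injective hleft
  have hlip : LipschitzWith (Real.toNNReal α⁻¹) g := by
    apply LipschitzWith.of_dist_le_mul
    intro u v
    rw [Real.coe_toNNReal _ (inv_nonneg.mpr hα.le)]
    obtain ⟨z, hz, hzle⟩ := cov_exists_preimage hα hcont hcov (g v) u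
    have hzz : z = g u := hinjf (by rw [hz, hgr u])
    rw [hzz, hgr v] at hzle
    rw [← mul_le_mul_iff_right₀ hα]
    calc α * dist (g u) (g v) ≤ dist u v := hzle
      _ = α * (α⁻¹ * dist u v) := by field_simp
  refine ⟨?_, g, hleft, hgr, hlip⟩
  rw [isHomeomorph_iff_exists_inverse]
  exact ⟨hcont, g, hleft, hgr, hlip.continuous⟩
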